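/- Let G=(V,E) be a finite simple graph and let [W,F] be any (not necessarily maximal) utter clique of G. Then every (x,y) ∈ ℝ^V × ℝ^E satisfying: x(W') + y(F' ∩ E(V∖W')) − y(E(W')) ≤ 1 for every maximal utter clique [W',F'] of G, y(δ(v)) ≤ x_v for every v ∈ V, and y_e ≥ 0 for every e ∈ E, also satisfies x(W) + y(F ∩ E(V∖W)) − y(E(W)) ≤ 1. -/

import Mathlib

open Finset
open scoped Classical

noncomputable section

variable {V : Type*} [Fintype V]

/-- A co-2-plex: a set of vertices inducing a subgraph of maximum degree at most 1. -/
def IsCo2Plex {α : Type*} (G : SimpleGraph α) (S : Finset α) : Prop :=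
  ∀ u ∈ S, (S.filter fun v => G.Adj u v).card ≤ 1

/-- Incidence vector of a vertex set. -/
def chiV {α : Type*} (S : Finset α) : α → ℝ := fun v => if v ∈ S then 1 else 0

/-- Incidence vector (on edges) of the set of edges with both endpoints in `S`. -/
def chiE {α : Type*} (G : SimpleGraph α) (S : Finset α) : G.edgeSet → ℝ :=
  fun e => if ∀ v ∈ (e : Sym2 α), v ∈ S then 1 else 0

/-- The co-2-plex polytope. -/
def co2PlexPolytope (G : SimpleGraph V) : Set (V → ℝ) :=
  convexHull ℝ {x | ∃ S : Finset V, IsCo2Plex G S ∧ x = chiV S}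

/-- The extended co-2-plex polytope. -/
def co2PlexPolytopeExt (G : SimpleGraph V) : Set ((V → ℝ) × (G.edgeSet → ℝ)) :=
  convexHull ℝ {p | ∃ S : Finset V, IsCo2Plex G S ∧ p = (chiV S, chiE G S)}

/-- δ(v): edges incident to `v`. -/
def inc (G : SimpleGraph V) (v : V) : Finset G.edgeSet :=
  univ.filter fun e => v ∈ (e : Sym2 V)

/-- E(W): edges with both endpoints in W. -/
def edgesIn (G : SimpleGraph V) (W : Finset V) : Finset G.edgeSet :=
  univ.filter fun e => ∀ v ∈ (e : Sym2 V), v ∈ W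

/-- E(V \ W): edges with both endpoints outside W. -/
def edgesOut (G : SimpleGraph V) (W : Finset V) : Finset G.edgeSet :=
  univ.filter fun e => ∀ v ∈ (e : Sym2 V), v ∉ W

/-- δ(W): edges with exactly one endpoint in W. -/
def edgesCut (G : SimpleGraph V) (W : Finset V) : Finset G.edgeSet :=
  univ.filter fun e => (∃ v ∈ (e : Sym2 V), v ∈ W) ∧ ∃ v ∈ (e : Sym2 V), v ∉ W

/-- The utter graph of `G`. -/
def utter (G : SimpleGraph V) : SimpleGraph (V ⊕ G.edgeSet) where
  Adj a b :=
    match a, b with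
    | Sum.inl u, Sum.inl v => G.Adj u v
    | Sum.inl w, Sum.inr e => w ∈ (e : Sym2 V) ∨ ∃ z ∈ (e : Sym2 V), G.Adj w z
    | Sum.inr e, Sum.inl w => w ∈ (e : Sym2 V) ∨ ∃ z ∈ (e : Sym2 V), G.Adj w z
    | Sum.inr e, Sum.inr f =>
        e ≠ f ∧ ((∃ v, v ∈ (e : Sym2 V) ∧ v ∈ (f : Sym2 V)) ∨
          ∃ a ∈ (e : Sym2 V), ∃ b ∈ (f : Sym2 V), G.Adj a b)
  symm := ⟨by
    rintro (u | e) (v | f) h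
    · exact h.symm
    · exact h
    · exact h
    · obtain ⟨hne, h⟩ := h
      refine ⟨hne.symm, ?_⟩
      rcases h with ⟨v, hv1, hv2⟩ | ⟨a, ha, b, hb, hab⟩
      · exact Or.inl ⟨v, hv2, hv1⟩
      · exact Or.inr ⟨b, hb, a, ha, hab.symm⟩⟩
  loopless := ⟨by
    rintro (u | e) h
    · exact G.loopless.irrefl u h
    · exact h.1 rfl⟩

/-- An utter clique: a pair [W, F] whose union is a clique of the utter graph. -/
def IsUtterClique (G : SimpleGraph V) (W : Finset V) (F : Finset G.edgeSet) : Prop :=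
  (utter G).IsClique (Sum.inl '' (W : Set V) ∪ Sum.inr '' (F : Set G.edgeSet))

/-- A maximal utter clique. -/
def IsMaxUtterClique (G : SimpleGraph V) (W : Finset V) (F : Finset G.edgeSet) : Prop :=
  IsUtterClique G W F ∧
    (∀ v ∉ W, ¬ IsUtterClique G (insert v W) F) ∧
    (∀ e ∉ F, ¬ IsUtterClique G W (insert e F))

/-- The contraction G/F: vertices are the connected components of the spanning
subgraph (V, F); two components are adjacent iff some edge of `G` joins them. -/
def contract {α : Type*} (G : SimpleGraph α) (F : Set (Sym2 α)) :
    SimpleGraph (SimpleGraph.fromEdgeSet F).ConnectedComponent where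
  Adj c d := c ≠ d ∧ ∃ u v, G.Adj u v ∧
      (SimpleGraph.fromEdgeSet F).connectedComponentMk u = c ∧
      (SimpleGraph.fromEdgeSet F).connectedComponentMk v = d
  symm := ⟨by
    rintro c d ⟨hne, u, v, h, hu, hv⟩
    exact ⟨hne.symm, v, u, h.symm, hv, hu⟩⟩
  loopless := ⟨by
    rintro c ⟨hne, _⟩
    exact hne rfl⟩

/-- A graph is perfect if every induced subgraph has chromatic number equal to
its clique number. -/
def IsPerfect {α : Type*} (G : SimpleGraph α) : Prop :=
  ∀ s : Set α, (G.induce s).chromaticNumber = ((G.induce s).cliqueNum : ℕ∞)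

/-- A graph is contraction perfect if all its contractions (by edge subsets) are perfect. -/
def ContractionPerfect (G : SimpleGraph V) : Prop :=
  ∀ F : Set (Sym2 V), F ⊆ G.edgeSet → IsPerfect (contract G F)

/-- Chordal: no induced cycle of length at least 4. -/
def Chordal (G : SimpleGraph V) : Prop :=
  ∀ n, 4 ≤ n → IsEmpty (SimpleGraph.cycleGraph n ↪g G)

/-- Maximal clique (as a finset). -/
def IsMaxCliqueF (G : SimpleGraph V) (K : Finset V) : Prop :=
  G.IsClique (K : Set V) ∧ ∀ K' : Finset V, G.IsClique (K' : Set V) → K ⊆ K' → K = K'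

/-- A 2-plex: every vertex of the induced subgraph has degree at least |K| - 2 in it. -/
def Is2Plex (G : SimpleGraph V) (K : Finset V) : Prop :=
  ∀ v ∈ K, K.card - 2 ≤ (K.filter fun u => G.Adj v u).card

/-- α₂(G[W]): the maximum cardinality of a co-2-plex contained in `W`. -/
def co2plexNumOn (G : SimpleGraph V) (W : Finset V) : ℕ :=
  Finset.univ.sup fun S : Finset V => if S ⊆ W ∧ IsCo2Plex G S then S.card else 0

/-- Facet-defining inequality of a full-dimensional polytope in ℝ^α: a valid
inequality whose tight points contain `card α` affinely independent points. -/
def IsFacet {α : Type*} [Fintype α] (P : Set (α → ℝ)) (a : α → ℝ) (c : ℝ) : Prop :=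
  (∀ x ∈ P, ∑ v, a v * x v ≤ c) ∧
  ∃ f : Fin (Fintype.card α) → (α → ℝ),
    AffineIndependent ℝ f ∧ ∀ i, f i ∈ P ∧ ∑ v, a v * f i v = c

/-- The polytope T(G) given by bounds and the star inequalities. -/
def TPoly (G : SimpleGraph V) [DecidableRel G.Adj] : Set (V → ℝ) :=
  {x | (∀ v, 0 ≤ x v ∧ x v ≤ 1) ∧
    ∀ (w : V), ∀ W ⊆ G.neighborFinset w,
      ∑ v ∈ W, x v + ((W.card : ℝ) - 1) * x w ≤ (W.card : ℝ)}

/-- Total dual integrality of the system `A x ≤ b`. -/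
def IsTDI {ι κ : Type*} [Fintype ι] [Fintype κ] (A : ι → κ → ℝ) (b : ι → ℝ) : Prop :=
  ∀ c : κ → ℤ, ∀ m : ℝ,
    IsGreatest {t | ∃ x : κ → ℝ, (∀ i, ∑ j, A i j * x j ≤ b i) ∧ t = ∑ j, (c j : ℝ) * x j} m →
    ∃ π : ι → ℤ, (∀ i, 0 ≤ π i) ∧ (∀ j, ∑ i, (π i : ℝ) * A i j = (c j : ℝ)) ∧
      ∑ i, (π i : ℝ) * b i = m


lemma vertex_step (G : SimpleGraph V) (W : Finset V) (F : Finset G.edgeSet)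
    (x : V → ℝ) (y : G.edgeSet → ℝ) (v : V) (hv : v ∉ W)
    (h8 : ∑ e ∈ inc G v, y e ≤ x v) (h9 : ∀ e : G.edgeSet, 0 ≤ y e) :
    ∑ u ∈ W, x u + ∑ e ∈ F ∩ edgesOut G W, y e - ∑ e ∈ edgesIn G W, y e ≤
    ∑ u ∈ insert v W, x u + ∑ e ∈ F ∩ edgesOut G (insert v W), y e -
      ∑ e ∈ edgesIn G (insert v W), y e := by
  classical
  have hxsum : ∑ u ∈ insert v W, x u = x v + ∑ u ∈ W, x u :=
    Finset.sum_insert hv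
  have hsub1 : F ∩ edgesOut G (insert v W) ⊆ F ∩ edgesOut G W := by
    intro e he
    simp only [Finset.mem_inter, edgesOut, Finset.mem_filter, Finset.mem_univ,
      true_and] at he ⊢
    exact ⟨he.1, fun u hu => he.2 u hu ∘ fun h => Finset.mem_insert_of_mem h⟩
  have hsub2 : edgesIn G W ⊆ edgesIn G (insert v W) := by
    intro e he
    simp only [edgesIn, Finset.mem_filter, Finset.mem_univ, true_and] at he ⊢
    exact fun u hu => Finset.mem_insert_of_mem (he u hu)
  set D1 := (F ∩ edgesOut G W) \ (F ∩ edgesOut G (insert v W)) with hD1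
  set D2 := edgesIn G (insert v W) \ edgesIn G W with hD2
  have hs1 : ∑ e ∈ F ∩ edgesOut G W, y e =
      ∑ e ∈ D1, y e + ∑ e ∈ F ∩ edgesOut G (insert v W), y e :=
    (Finset.sum_sdiff hsub1).symm
  have hs2 : ∑ e ∈ edgesIn G (insert v W), y e =
      ∑ e ∈ D2, y e + ∑ e ∈ edgesIn G W, y e :=
    (Finset.sum_sdiff hsub2).symm
  have hD1inc : D1 ⊆ inc G v := by
    intro e he
    simp only [hD1, Finset.mem_sdiff, Finset.mem_inter, edgesOut, Finset.mem_filter,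
      Finset.mem_univ, true_and, not_and, not_forall] at he
    obtain ⟨⟨heF, hout⟩, hnot⟩ := he
    obtain ⟨u, hu, hu'⟩ := hnot heF
    have : u ∈ insert v W := not_not.mp hu'
    rcases Finset.mem_insert.mp this with h | h
    · simpa [inc, h] using hu
    · exact absurd h (hout u hu)
  have hD2inc : D2 ⊆ inc G v := by
    intro e he
    simp only [hD2, Finset.mem_sdiff, edgesIn, Finset.mem_filter, Finset.mem_univ,
      true_and, not_forall] at he
    obtain ⟨hin, u, hu, hu'⟩ := he
    rcases Finset.mem_insert.mp (hin u hu) with h | h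
    · simpa [inc, h] using hu
    · exact absurd h hu'
  have hdisj : Disjoint D1 D2 := by
    rw [Finset.disjoint_left]
    rintro e he1 he2
    have hout : ∀ u ∈ (e : Sym2 V), u ∉ W := by
      have h := (Finset.mem_inter.mp (Finset.mem_sdiff.mp he1).1).2
      simpa [edgesOut] using h
    have hin : ∀ u ∈ (e : Sym2 V), u ∈ insert v W := by
      have h := (Finset.mem_sdiff.mp he2).1
      simpa [edgesIn] using h
    obtain ⟨s, hs⟩ := e
    induction s using Sym2.ind with
    | _ a b =>
      have hab : G.Adj a b := G.mem_edgeSet.mp hs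
      have ha : a ∈ insert v W := hin a (by simp)
      have hb : b ∈ insert v W := hin b (by simp)
      have ha' : a ∉ W := hout a (by simp)
      have hb' : b ∉ W := hout b (by simp)
      have hav : a = v := by rcases Finset.mem_insert.mp ha with h | h; exact h; exact absurd h ha'
      have hbv : b = v := by rcases Finset.mem_insert.mp hb with h | h; exact h; exact absurd h hb'
      exact hab.ne (hav.trans hbv.symm)
  have hunion : ∑ e ∈ D1, y e + ∑ e ∈ D2, y e ≤ x v := by
    calc ∑ e ∈ D1, y e + ∑ e ∈ D2, y e = ∑ e ∈ D1 ∪ D2, y e :=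
          (Finset.sum_union hdisj).symm
      _ ≤ ∑ e ∈ inc G v, y e := by
          apply Finset.sum_le_sum_of_subset_of_nonneg
          · exact Finset.union_subset hD1inc hD2inc
          · intro e _ _; exact h9 e
      _ ≤ x v := h8
  rw [hxsum, hs1, hs2]
  linarith

/-- The inequality of any (not necessarily maximal) utter clique
is implied by the system (7)-(9). -/
theorem stmt1 (G : SimpleGraph V) (W : Finset V) (F : Finset G.edgeSet)
    (hWF : IsUtterClique G W F)
    (x : V → ℝ) (y : G.edgeSet → ℝ)
    (h7 : ∀ (W' : Finset V) (F' : Finset G.edgeSet), IsMaxUtterClique G W' F' →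
      ∑ v ∈ W', x v + ∑ e ∈ F' ∩ edgesOut G W', y e - ∑ e ∈ edgesIn G W', y e ≤ 1)
    (h8 : ∀ v : V, ∑ e ∈ inc G v, y e ≤ x v)
    (h9 : ∀ e : G.edgeSet, 0 ≤ y e) :
    ∑ v ∈ W, x v + ∑ e ∈ F ∩ edgesOut G W, y e - ∑ e ∈ edgesIn G W, y e ≤ 1 := by
  classical
  suffices H : ∀ n (W : Finset V) (F : Finset G.edgeSet),
      Fintype.card V - W.card + (Fintype.card G.edgeSet - F.card) ≤ n →
      IsUtterClique G W F →
      ∑ v ∈ W, x v + ∑ e ∈ F ∩ edgesOut G W, y e - ∑ e ∈ edgesIn G W, y e ≤ 1 by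
    exact H _ W F le_rfl hWF
  intro n
  induction n with
  | zero =>
    intro W F hm hc
    have hWcard : W.card = Fintype.card V := le_antisymm (Finset.card_le_univ W) (by omega)
    have hFcard : F.card = Fintype.card G.edgeSet := le_antisymm (Finset.card_le_univ F) (by omega)
    have hWu : W = Finset.univ := Finset.eq_univ_of_card W hWcard
    have hFu : F = Finset.univ := Finset.eq_univ_of_card F hFcard
    refine h7 W F ⟨hc, ?_, ?_⟩
    · intro v hv; exact absurd (hWu ▸ Finset.mem_univ v) hv
    · intro e he; exact absurd (hFu ▸ Finset.mem_univ e) he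
  | succ n ih =>
    intro W F hm hc
    by_cases hmax : IsMaxUtterClique G W F
    · exact h7 W F hmax
    · rw [IsMaxUtterClique] at hmax
      push_neg at hmax
      by_cases hvex : ∃ v, v ∉ W ∧ IsUtterClique G (insert v W) F
      · obtain ⟨v, hv, hcv⟩ := hvex
        have hlt : W.card < Fintype.card V :=
          Finset.card_lt_card (Finset.ssubset_univ_iff.mpr fun h => hv (h ▸ Finset.mem_univ v))
        have hcard : (insert v W).card = W.card + 1 := Finset.card_insert_of_notMem hv
        have hstep := vertex_step G W F x y v hv (h8 v) h9
        have hrec := ih (insert v W) F (by omega) hcv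
        linarith
      · push_neg at hvex
        obtain ⟨e, he, hce⟩ := hmax hc hvex
        have hlt : F.card < Fintype.card G.edgeSet :=
          Finset.card_lt_card (Finset.ssubset_univ_iff.mpr fun h => he (h ▸ Finset.mem_univ e))
        have hcard : (insert e F).card = F.card + 1 := Finset.card_insert_of_notMem he
        have hstep : ∑ f ∈ F ∩ edgesOut G W, y f ≤
            ∑ f ∈ (insert e F) ∩ edgesOut G W, y f := by
          apply Finset.sum_le_sum_of_subset_of_nonneg
          · exact Finset.inter_subset_inter (Finset.subset_insert e F) le_rfl
          · intro f _ _; exact h9 f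
        have hrec := ih W (insert e F) (by omega) hce
        linarith

end
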